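/- arXiv:2302.09707 — 3 statements merged into one kernel-verified Lean document; each statement's English description precedes it below -/
import Mathlib

section
/- For every real λ ≥ 1 and every real ξ with 0 < ξ, one has λ·(ξ/√λ − log(1 + ξ/√λ)) ≥ (1/2)·ξ²/(1 + ξ). -/
lemma key_log_ineq (x : ℝ) (hx : 0 ≤ x) :
    x ^ 2 / (2 * (1 + x)) ≤ x - Real.log (1 + x) := by
  set f : ℝ → ℝ := fun y => y - Real.log (1 + y) - y ^ 2 / (2 * (1 + y)) with hf
  have hder : ∀ y : ℝ, 0 ≤ y → HasDerivAt f (y ^ 2 / (2 * (1 + y) ^ 2)) y := by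
    intro y hy
    have hne : (1 : ℝ) + y ≠ 0 := by linarith
    have hne2 : (2 : ℝ) * (1 + y) ≠ 0 := by positivity
    have h1 : HasDerivAt (fun y : ℝ => Real.log (1 + y)) (1 / (1 + y)) y := by
      have := ((hasDerivAt_id y).const_add 1).log hne
      simpa using this
    have h2 : HasDerivAt (fun y : ℝ => y ^ 2 / (2 * (1 + y)))
        (((2 : ℕ) * y ^ 1 * (2 * (1 + y)) - y ^ 2 * 2) / (2 * (1 + y)) ^ 2) y := by
      have := (hasDerivAt_pow 2 y).div (((hasDerivAt_id y).const_add 1).const_mul 2) hne2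
      exact this.congr_deriv (by norm_num)
    have h : HasDerivAt f _ y := ((hasDerivAt_id y).sub h1).sub h2
    convert h using 1
    field_simp
    ring
  have hmono : MonotoneOn f (Set.Ici 0) := by
    apply monotoneOn_of_deriv_nonneg (convex_Ici 0)
    · exact fun y hy => (hder y hy).continuousAt.continuousWithinAt
    · intro y hy
      rw [interior_Ici] at hy
      exact (hder y (le_of_lt hy)).differentiableAt.differentiableWithinAt
    · intro y hy
      rw [interior_Ici] at hy
      rw [(hder y hy.le).deriv]
      positivity
  have h0 : f 0 = 0 := by simp [hf]
  have := hmono (Set.self_mem_Ici) (Set.mem_Ici.mpr hx) hx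
  rw [h0] at this
  simp only [hf] at this
  linarith

theorem stmt0 (l ξ : ℝ) (hl : 1 ≤ l) (hξ : 0 < ξ) :
    l * (ξ / Real.sqrt l - Real.log (1 + ξ / Real.sqrt l)) ≥ (1 / 2) * ξ ^ 2 / (1 + ξ) := by
  have hl0 : (0 : ℝ) < l := lt_of_lt_of_le one_pos hl
  set s := Real.sqrt l with hs
  have hs1 : 1 ≤ s := by
    rw [hs]
    exact Real.one_le_sqrt.mpr hl
  have hs0 : (0 : ℝ) < s := lt_of_lt_of_le one_pos hs1
  set x := ξ / s with hxdef
  have hx0 : 0 < x := div_pos hξ hs0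
  have hkey := key_log_ineq x hx0.le
  have hsq : s ^ 2 = l := Real.sq_sqrt hl0.le
  have h1 : l * (x ^ 2 / (2 * (1 + x))) ≤ l * (x - Real.log (1 + x)) :=
    mul_le_mul_of_nonneg_left hkey hl0.le
  have h2 : l * (x ^ 2 / (2 * (1 + x))) = ξ ^ 2 / (2 * (1 + x)) := by
    have : x ^ 2 = ξ ^ 2 / l := by
      rw [hxdef, div_pow, hsq]
    rw [this]
    field_simp
  have h3 : x ≤ ξ := by
    rw [hxdef]
    exact div_le_self hξ.le hs1
  have h4 : ξ ^ 2 / (2 * (1 + ξ)) ≤ ξ ^ 2 / (2 * (1 + x)) := by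
    apply div_le_div_of_nonneg_left (by positivity) (by positivity) (by linarith)
  have h5 : (1 / 2) * ξ ^ 2 / (1 + ξ) = ξ ^ 2 / (2 * (1 + ξ)) := by
    rw [div_eq_div_iff (by linarith) (by positivity)]
    ring
  linarith
end

section
/- Let λ ∈ ℝ, let Ψ and Γ be p×p symmetric positive definite real matrices, and choose c > 0 such that cI ≺ Ψ and cI ≺ Γ (i.e. Ψ − cI and Γ − cI are positive definite). Then the integral over the cone of p×p symmetric positive definite matrices Σ of tr(Σ)·|Σ|^λ·exp(−tr(ΨΣ) − tr(ΓΣ^{-1})) dΣ is finite. Consequently, a matrix generalized inverse Gaussian distributed random matrix has finite mean of its trace. -/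
open MeasureTheory Matrix

section MGIGAux

open Finset

lemma mgig_dotSqPos {p : ℕ} {v : Fin p → ℝ} (hv : v ≠ 0) : 0 < v ⬝ᵥ v := by
  obtain ⟨i, hi⟩ := Function.ne_iff.mp hv
  exact Finset.sum_pos' (fun j _ => mul_self_nonneg _)
    ⟨i, Finset.mem_univ i, mul_self_pos.mpr (by simpa using hi)⟩

lemma mgig_diag_pos {p : ℕ} {A : Matrix (Fin p) (Fin p) ℝ} (hA : A.PosDef) (i : Fin p) :
    0 < A i i := by
  simpa using hA.dotProduct_mulVec_pos (x := Pi.single i 1) (fun h => by simpa using congrFun h i)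

lemma mgig_trace_pos {p : ℕ} (hp : 0 < p) {A : Matrix (Fin p) (Fin p) ℝ} (hA : A.PosDef) :
    0 < A.trace := by
  have : Nonempty (Fin p) := ⟨⟨0, hp⟩⟩
  exact Finset.sum_pos (fun i _ => mgig_diag_pos hA i) Finset.univ_nonempty

lemma mgig_trace_mul_nonneg {p : ℕ} {A B : Matrix (Fin p) (Fin p) ℝ}
    (hA : A.PosSemidef) (hB : B.PosSemidef) : 0 ≤ (A * B).trace := by
  classical
  obtain ⟨X, hX, -, hXB⟩ := open scoped MatrixOrder in
    CFC.exists_sqrt_of_isSelfAdjoint_of_quasispectrumRestricts hB.isHermitian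
      (QuasispectrumRestricts.nnreal_of_nonneg hB.nonneg)
  have h1 : A * B = A * X * X := by rw [Matrix.mul_assoc, hXB]
  rw [h1, Matrix.trace_mul_comm, ← Matrix.mul_assoc]
  have h3 : (X * A * X).PosSemidef := by
    have := hA.conjTranspose_mul_mul_same X
    rwa [show Xᴴ = X from hX] at this
  exact h3.trace_nonneg

lemma mgig_entry_abs_le {p : ℕ} {A : Matrix (Fin p) (Fin p) ℝ} (hA : A.PosDef) (a b : Fin p) :
    |A a b| ≤ A.trace := by
  have hdiag := mgig_diag_pos hA
  rcases eq_or_ne a b with rfl | hab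
  · rw [abs_of_pos (hdiag a)]
    exact Finset.single_le_sum (fun i _ => (hdiag i).le) (Finset.mem_univ a)
  · have hsym : A b a = A a b := by
      conv_rhs => rw [← hA.1]
      simp [Matrix.conjTranspose_apply]
    have key : ∀ d : ℝ, d = 1 ∨ d = -1 →
        0 < A a a + d * (2 * A a b) + A b b := by
      intro d hd
      have hv : (Pi.single a 1 + Pi.single b d : Fin p → ℝ) ≠ 0 := by
        intro h
        have := congrFun h a
        simp [Pi.single_apply, hab.symm, Pi.single_eq_same] at this
      have hq := hA.dotProduct_mulVec_pos hv
      have hcalc : (Pi.single a (1:ℝ) + Pi.single b d) ⬝ᵥ (A *ᵥ (Pi.single a 1 + Pi.single b d))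
          = 1 * 1 * A a a + 1 * d * (A a b + A b a) + d * d * A b b := by
        simp [Matrix.mulVec_add, dotProduct_add, add_dotProduct, Matrix.mulVec_single]
        ring
      rw [star_trivial, hcalc] at hq
      rcases hd with rfl | rfl <;> nlinarith [hsym]
    have h1 := key 1 (Or.inl rfl)
    have h2 := key (-1) (Or.inr rfl)
    have habs : |2 * A a b| < A a a + A b b := by
      rw [abs_lt]; constructor <;> nlinarith
    have hsum : A a a + A b b ≤ A.trace := by
      have : ({a, b} : Finset (Fin p)).sum (fun i => A i i) = A a a + A b b :=
        Finset.sum_pair hab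
      rw [← this]
      exact Finset.sum_le_sum_of_subset_of_nonneg (Finset.subset_univ _)
        (fun i _ _ => (hdiag i).le)
    have : |A a b| ≤ |2 * A a b| := by
      rw [abs_mul, abs_two]; nlinarith [abs_nonneg (A a b)]
    linarith

lemma mgig_trace_eigen {p : ℕ} {A : Matrix (Fin p) (Fin p) ℝ} (hA : A.IsHermitian) :
    A.trace = ∑ i, hA.eigenvalues i := by
  conv_lhs => rw [hA.spectral_theorem]
  rw [Unitary.conjStarAlgAut_apply, Matrix.trace_mul_comm, ← Matrix.mul_assoc, Unitary.coe_star_mul_self, Matrix.one_mul,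
    Matrix.trace_diagonal]
  simp

lemma mgig_det_le_trace_pow {p : ℕ} {A : Matrix (Fin p) (Fin p) ℝ} (hA : A.PosDef) :
    A.det ≤ A.trace ^ p := by
  have hdet : A.det = ∏ i, hA.1.eigenvalues i := by
    have := hA.1.det_eq_prod_eigenvalues
    simpa using this
  have hev := hA.eigenvalues_pos
  have htr : A.trace = ∑ i, hA.1.eigenvalues i := mgig_trace_eigen hA.1
  rw [hdet]
  calc ∏ i, hA.1.eigenvalues i ≤ ∏ _i : Fin p, A.trace := by
        apply Finset.prod_le_prod (fun i _ => (hev i).le)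
        intro i _
        rw [htr]
        exact Finset.single_le_sum (fun j _ => (hev j).le) (Finset.mem_univ i)
    _ = A.trace ^ p := by simp [Finset.prod_const]

lemma mgig_pow_exp {b : ℝ} (hb : 0 < b) (n : ℕ) : ∀ t : ℝ, 0 ≤ t →
    t ^ n * Real.exp (-(b * t)) ≤ ((n : ℝ) / b) ^ n := by
  intro t ht
  rcases Nat.eq_zero_or_pos n with rfl | hn
  · simp only [pow_zero, one_mul]
    exact Real.exp_le_one_iff.mpr (by nlinarith)
  rcases ht.eq_or_lt with rfl | ht
  · rw [zero_pow hn.ne', zero_mul]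
    positivity
  have hn' : (0:ℝ) < n := by exact_mod_cast hn
  have hexp : (b * t / n) ^ n ≤ Real.exp (b * t) := by
    have h1 : (b * t / n) ^ n ≤ (1 + b * t / n) ^ n :=
      pow_le_pow_left₀ (by positivity) (by linarith) n
    have h2 : (1 + b * t / n) ^ n ≤ Real.exp (b * t / n) ^ n :=
      pow_le_pow_left₀ (by positivity) (by linarith [Real.add_one_le_exp (b * t / n)]) n
    have h3 : Real.exp (b * t / n) ^ n = Real.exp (b * t) := by
      rw [← Real.exp_nat_mul]
      congr 1
      field_simp
    linarith
  have h4 : t ^ n ≤ ((n:ℝ)/b) ^ n * Real.exp (b * t) := by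
    have : ((n:ℝ)/b) ^ n * (b * t / n) ^ n = t ^ n := by
      rw [← mul_pow]
      congr 1
      field_simp
    calc t ^ n = ((n:ℝ)/b) ^ n * (b * t / n) ^ n := this.symm
      _ ≤ ((n:ℝ)/b) ^ n * Real.exp (b * t) := by
          apply mul_le_mul_of_nonneg_left hexp (by positivity)
  calc t ^ n * Real.exp (-(b*t)) ≤ (((n:ℝ)/b) ^ n * Real.exp (b * t)) * Real.exp (-(b*t)) := by
        apply mul_le_mul_of_nonneg_right h4 (Real.exp_nonneg _)
    _ = ((n:ℝ)/b) ^ n := by rw [mul_assoc, ← Real.exp_add]; simp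

lemma mgig_rpow_exp {a b : ℝ} (ha : 0 ≤ a) (hb : 0 < b) :
    ∃ C : ℝ, 0 ≤ C ∧ ∀ t : ℝ, 0 < t → t ^ a * Real.exp (-(b * t)) ≤ C := by
  refine ⟨max (((⌈a⌉₊ : ℝ) / b) ^ ⌈a⌉₊) 1, le_max_of_le_right zero_le_one, fun t ht => ?_⟩
  rcases le_or_gt t 1 with h1 | h1
  · apply le_max_of_le_right
    have e1 : t ^ a ≤ 1 := Real.rpow_le_one ht.le h1 ha
    have e2 : Real.exp (-(b*t)) ≤ 1 := Real.exp_le_one_iff.mpr (by nlinarith)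
    nlinarith [Real.exp_nonneg (-(b*t)), Real.rpow_nonneg ht.le a]
  · apply le_max_of_le_left
    have e1 : t ^ a ≤ t ^ (⌈a⌉₊ : ℕ) := by
      rw [← Real.rpow_natCast t ⌈a⌉₊]
      exact Real.rpow_le_rpow_of_exponent_le h1.le (Nat.le_ceil a)
    calc t ^ a * Real.exp (-(b*t)) ≤ t ^ (⌈a⌉₊:ℕ) * Real.exp (-(b*t)) := by
          apply mul_le_mul_of_nonneg_right e1 (Real.exp_nonneg _)
      _ ≤ _ := mgig_pow_exp hb _ t (by linarith)

lemma mgig_exp_abs_integrable {d : ℝ} (hd : 0 < d) :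
    Integrable (fun x : ℝ => Real.exp (-(d * |x|))) := by
  have hcont : Continuous fun x : ℝ => Real.exp (-(d * |x|)) := by continuity
  apply Integrable.mono' (g := fun x : ℝ => (1 + (2/d)^2) * (1 + x^2)⁻¹)
    (integrable_inv_one_add_sq.const_mul _) hcont.aestronglyMeasurable
  refine ae_of_all _ fun x => ?_
  have h1 : 0 < 1 + x^2 := by positivity
  rw [Real.norm_eq_abs, abs_of_pos (Real.exp_pos _),
    show (1 + (2/d)^2) * (1+x^2)⁻¹ = (1+(2/d)^2)/(1+x^2) from by ring, le_div_iff₀ h1]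
  have h2 : |x| ^ 2 * Real.exp (-(d * |x|)) ≤ (2 / d) ^ 2 := by
    simpa using mgig_pow_exp hd 2 |x| (abs_nonneg x)
  rw [sq_abs] at h2
  have h3 : Real.exp (-(d * |x|)) ≤ 1 :=
    Real.exp_le_one_iff.mpr (by nlinarith [abs_nonneg x])
  nlinarith [Real.exp_nonneg (-(d * |x|))]

end MGIGAux

/-- Build a symmetric matrix from its `p(p+1)/2` free entries. -/
def symToMat (p : ℕ) (x : {ij : Fin p × Fin p // ij.1 ≤ ij.2} → ℝ) :
    Matrix (Fin p) (Fin p) ℝ :=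
  Matrix.of fun a b => if h : a ≤ b then x ⟨(a, b), h⟩ else x ⟨(b, a), le_of_not_ge h⟩

section SymToMatAux

lemma symToMat_symm (p : ℕ) (x : {ij : Fin p × Fin p // ij.1 ≤ ij.2} → ℝ) (i j : Fin p) :
    symToMat p x i j = symToMat p x j i := by
  rcases le_or_gt i j with h | h
  · rcases eq_or_lt_of_le h with rfl | hlt
    · rfl
    · simp [symToMat, h, not_le.mpr hlt]
  · simp [symToMat, h.le, not_le.mpr h]

lemma symToMat_isHermitian (p : ℕ) (x : {ij : Fin p × Fin p // ij.1 ≤ ij.2} → ℝ) :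
    (symToMat p x).IsHermitian := by
  ext i j
  rw [Matrix.conjTranspose_apply, star_trivial, symToMat_symm]

lemma symToMat_continuous (p : ℕ) : Continuous (symToMat p) := by
  apply continuous_pi; intro i; apply continuous_pi; intro j
  show Continuous fun x => symToMat p x i j
  unfold symToMat
  by_cases h : i ≤ j
  · simpa [h] using continuous_apply (⟨(i, j), h⟩ : {ij : Fin p × Fin p // ij.1 ≤ ij.2})
  · simpa [h] using continuous_apply (⟨(j, i), le_of_not_ge h⟩ :
      {ij : Fin p × Fin p // ij.1 ≤ ij.2})

lemma mgig_spectral_gap {p : ℕ} {A : Matrix (Fin p) (Fin p) ℝ} (hA : A.PosDef) :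
    ∃ ε : ℝ, 0 < ε ∧ ∀ v : Fin p → ℝ, ε * (v ⬝ᵥ v) ≤ v ⬝ᵥ (A *ᵥ v) := by
  rcases Nat.eq_zero_or_pos p with rfl | hp
  · exact ⟨1, one_pos, fun v => by simp [dotProduct]⟩
  have hne : Nonempty (Fin p) := ⟨⟨0, hp⟩⟩
  set lam := hA.1.eigenvalues with hlam
  set ε := Finset.univ.inf' Finset.univ_nonempty lam with hε
  have hεpos : 0 < ε := by
    obtain ⟨i, _, hi⟩ := Finset.exists_mem_eq_inf' Finset.univ_nonempty lam
    rw [hε, hi]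
    exact hA.eigenvalues_pos i
  refine ⟨ε, hεpos, fun v => ?_⟩
  set U := (hA.1.eigenvectorUnitary : Matrix (Fin p) (Fin p) ℝ) with hUdef
  have hUU : U * star U = 1 := Matrix.mem_unitaryGroup_iff.mp hA.1.eigenvectorUnitary.2
  have hsub : A - ε • 1 = U * Matrix.diagonal (fun i => lam i - ε) * star U := by
    have h1 : A = U * Matrix.diagonal (RCLike.ofReal ∘ lam) * star U := hA.1.spectral_theorem
    have h2 : (ε • 1 : Matrix (Fin p) (Fin p) ℝ) = U * (ε • 1) * star U := by
      rw [Matrix.mul_smul, Matrix.smul_mul, Matrix.mul_one, hUU]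
    conv_lhs => rw [h1, h2]
    rw [← Matrix.sub_mul, ← Matrix.mul_sub]
    congr 2
    ext i j
    by_cases h : i = j <;>
      simp [Matrix.diagonal, Matrix.one_apply, h, Matrix.smul_apply]
  have hdiagPSD : (Matrix.diagonal (fun i => lam i - ε)).PosSemidef := by
    apply Matrix.PosSemidef.diagonal
    intro i
    simp only [Pi.zero_apply, sub_nonneg]
    exact Finset.inf'_le _ (Finset.mem_univ i)
  have hPSD : (A - ε • 1).PosSemidef := by
    rw [hsub]
    exact hdiagPSD.mul_mul_conjTranspose_same U
  have := hPSD.dotProduct_mulVec_nonneg v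
  rw [star_trivial] at this
  have hexp : v ⬝ᵥ ((A - ε • 1) *ᵥ v) = v ⬝ᵥ (A *ᵥ v) - ε * (v ⬝ᵥ v) := by
    rw [Matrix.sub_mulVec, dotProduct_sub]
    congr 1
    rw [Matrix.smul_mulVec, Matrix.one_mulVec, dotProduct_smul, smul_eq_mul]
  rw [hexp] at this
  linarith

lemma mgig_measurableS (p : ℕ) : MeasurableSet {x : {ij : Fin p × Fin p // ij.1 ≤ ij.2} → ℝ |
    (symToMat p x).PosDef} := by
  have hSeq : {x : {ij : Fin p × Fin p // ij.1 ≤ ij.2} → ℝ | (symToMat p x).PosDef} =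
      ⋃ q : {q : ℚ // 0 < q}, {x | ∀ v : Fin p → ℝ,
        (q.1 : ℝ) * (v ⬝ᵥ v) ≤ v ⬝ᵥ ((symToMat p x) *ᵥ v)} := by
    ext x
    simp only [Set.mem_setOf_eq, Set.mem_iUnion]
    constructor
    · intro hPD
      obtain ⟨ε, hε, hq⟩ := mgig_spectral_gap hPD
      obtain ⟨q, hq0, hqε⟩ := exists_rat_btwn hε
      refine ⟨⟨q, by exact_mod_cast hq0⟩, fun v => ?_⟩
      have h1 : (q:ℝ) * (v ⬝ᵥ v) ≤ ε * (v ⬝ᵥ v) := by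
        apply mul_le_mul_of_nonneg_right hqε.le
        exact Finset.sum_nonneg fun j _ => mul_self_nonneg _
      exact h1.trans (hq v)
    · rintro ⟨⟨q, hq0⟩, hq⟩
      refine Matrix.PosDef.of_dotProduct_mulVec_pos (symToMat_isHermitian p x) fun v hv => ?_
      rw [star_trivial]
      have h1 : 0 < (q:ℝ) * (v ⬝ᵥ v) :=
        mul_pos (by exact_mod_cast hq0) (mgig_dotSqPos hv)
      exact h1.trans_le (hq v)
  rw [hSeq]
  apply MeasurableSet.iUnion
  intro q
  have : {x : {ij : Fin p × Fin p // ij.1 ≤ ij.2} → ℝ | ∀ v : Fin p → ℝ,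
      (q.1 : ℝ) * (v ⬝ᵥ v) ≤ v ⬝ᵥ ((symToMat p x) *ᵥ v)} =
      ⋂ v : Fin p → ℝ, {x | (q.1 : ℝ) * (v ⬝ᵥ v) ≤ v ⬝ᵥ ((symToMat p x) *ᵥ v)} := by
    ext x; simp
  rw [this]
  refine IsClosed.measurableSet (isClosed_iInter fun v => isClosed_le continuous_const ?_)
  exact continuous_const.dotProduct ((symToMat_continuous p).matrix_mulVec continuous_const)

/-- The core scalar bound. -/
lemma mgig_core {p : ℕ} (hp : 0 < p) (l c : ℝ) (hc : 0 < c) :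
    ∃ C : ℝ, 0 ≤ C ∧ ∀ A : Matrix (Fin p) (Fin p) ℝ, A.PosDef →
      A.trace * A.det ^ l * (Real.exp (-(c * A.trace)) * Real.exp (-(c * A⁻¹.trace)))
        ≤ C * Real.exp (-(c/2 * A.trace)) := by
  rcases le_or_gt 0 l with hl | hl
  · obtain ⟨C, hC0, hC⟩ := mgig_rpow_exp (a := 1 + p * l) (by positivity) (half_pos hc)
    refine ⟨C, hC0, fun A hA => ?_⟩
    have ht := mgig_trace_pos hp hA
    have hdet := hA.det_pos
    have h1 : A.det ^ l ≤ (A.trace ^ p : ℝ) ^ l :=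
      Real.rpow_le_rpow hdet.le (mgig_det_le_trace_pow hA) hl
    have h2 : (A.trace ^ p : ℝ) ^ l = A.trace ^ ((p : ℝ) * l) := by
      rw [← Real.rpow_natCast A.trace p, ← Real.rpow_mul ht.le]
    have h3 : A.trace * A.trace ^ ((p:ℝ) * l) = A.trace ^ (1 + (p:ℝ)*l) := by
      rw [Real.rpow_add ht, Real.rpow_one]
    have hE2 : Real.exp (-(c * A⁻¹.trace)) ≤ 1 := by
      apply Real.exp_le_one_iff.mpr
      have : 0 < A⁻¹.trace := mgig_trace_pos hp hA.inv
      nlinarith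
    have hsplit : Real.exp (-(c * A.trace)) =
        Real.exp (-(c/2 * A.trace)) * Real.exp (-(c/2 * A.trace)) := by
      rw [← Real.exp_add]; congr 1; ring
    have key : A.trace * A.det ^ l * Real.exp (-(c/2 * A.trace)) ≤ C := by
      calc A.trace * A.det ^ l * Real.exp (-(c/2 * A.trace))
          ≤ A.trace * A.trace ^ ((p:ℝ)*l) * Real.exp (-(c/2 * A.trace)) := by
            apply mul_le_mul_of_nonneg_right _ (Real.exp_nonneg _)
            apply mul_le_mul_of_nonneg_left (h1.trans_eq h2) ht.le
        _ = A.trace ^ (1 + (p:ℝ)*l) * Real.exp (-(c/2 * A.trace)) := by rw [h3]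
        _ ≤ C := hC A.trace ht
    calc A.trace * A.det ^ l * (Real.exp (-(c * A.trace)) * Real.exp (-(c * A⁻¹.trace)))
        ≤ A.trace * A.det ^ l * (Real.exp (-(c * A.trace)) * 1) := by
          apply mul_le_mul_of_nonneg_left
          · exact mul_le_mul_of_nonneg_left hE2 (Real.exp_nonneg _)
          · positivity
      _ = (A.trace * A.det ^ l * Real.exp (-(c/2 * A.trace))) * Real.exp (-(c/2 * A.trace)) := by
          rw [mul_one, hsplit]; ring
      _ ≤ C * Real.exp (-(c/2 * A.trace)) :=
          mul_le_mul_of_nonneg_right key (Real.exp_nonneg _)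
  · obtain ⟨C₂, hC₂0, hC₂⟩ := mgig_rpow_exp (a := p * (-l))
      (mul_nonneg (Nat.cast_nonneg p) (by linarith)) hc
    refine ⟨2/c * C₂, by positivity, fun A hA => ?_⟩
    have ht := mgig_trace_pos hp hA
    have hs := mgig_trace_pos hp hA.inv
    have hdet := hA.det_pos
    have hdetinv : A⁻¹.det = A.det⁻¹ := by
      rw [Matrix.det_nonsing_inv, Ring.inverse_eq_inv']
    have hdl : A.det ^ l = A⁻¹.det ^ (-l) := by
      rw [hdetinv, Real.inv_rpow hdet.le, Real.rpow_neg hdet.le, inv_inv]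
    have h1 : A⁻¹.det ^ (-l) ≤ (A⁻¹.trace ^ p : ℝ) ^ (-l) :=
      Real.rpow_le_rpow hA.inv.det_pos.le (mgig_det_le_trace_pow hA.inv) (by linarith)
    have h2 : (A⁻¹.trace ^ p : ℝ) ^ (-l) = A⁻¹.trace ^ ((p : ℝ) * (-l)) := by
      rw [← Real.rpow_natCast A⁻¹.trace p, ← Real.rpow_mul hs.le]
    have hT : A.trace * Real.exp (-(c/2 * A.trace)) ≤ 2/c := by
      have := mgig_pow_exp (half_pos hc) 1 A.trace ht.le
      simpa [div_div_eq_mul_div] using this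
    have hS : A⁻¹.trace ^ ((p:ℝ) * (-l)) * Real.exp (-(c * A⁻¹.trace)) ≤ C₂ := hC₂ _ hs
    have hsplit : Real.exp (-(c * A.trace)) =
        Real.exp (-(c/2 * A.trace)) * Real.exp (-(c/2 * A.trace)) := by
      rw [← Real.exp_add]; congr 1; ring
    calc A.trace * A.det ^ l * (Real.exp (-(c * A.trace)) * Real.exp (-(c * A⁻¹.trace)))
        ≤ A.trace * A⁻¹.trace ^ ((p:ℝ) * (-l)) *
            (Real.exp (-(c * A.trace)) * Real.exp (-(c * A⁻¹.trace))) := by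
          apply mul_le_mul_of_nonneg_right _ (by positivity)
          apply mul_le_mul_of_nonneg_left _ ht.le
          rw [hdl]
          exact h1.trans_eq h2
      _ = (A.trace * Real.exp (-(c/2 * A.trace))) *
            (A⁻¹.trace ^ ((p:ℝ) * (-l)) * Real.exp (-(c * A⁻¹.trace))) *
            Real.exp (-(c/2 * A.trace)) := by
          rw [hsplit]; ring
      _ ≤ (2/c) * C₂ * Real.exp (-(c/2 * A.trace)) := by
          apply mul_le_mul_of_nonneg_right _ (Real.exp_nonneg _)
          apply mul_le_mul hT hS (by positivity) (by positivity)
      _ = 2/c * C₂ * Real.exp (-(c/2 * A.trace)) := rfl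

end SymToMatAux

theorem stmt10 (p : ℕ) (l c : ℝ) (Ψ Γ : Matrix (Fin p) (Fin p) ℝ)
    (hΨ : Ψ.PosDef) (hΓ : Γ.PosDef) (hc : 0 < c)
    (hΨc : (Ψ - c • (1 : Matrix (Fin p) (Fin p) ℝ)).PosDef)
    (hΓc : (Γ - c • (1 : Matrix (Fin p) (Fin p) ℝ)).PosDef) :
    IntegrableOn
      (fun x : {ij : Fin p × Fin p // ij.1 ≤ ij.2} → ℝ =>
        (symToMat p x).trace * (symToMat p x).det ^ l *
          Real.exp (-((Ψ * symToMat p x).trace) - ((Γ * (symToMat p x)⁻¹).trace)))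
      {x | (symToMat p x).PosDef} volume := by
  rcases Nat.eq_zero_or_pos p with rfl | hp
  · have hzero : (fun x : {ij : Fin 0 × Fin 0 // ij.1 ≤ ij.2} → ℝ =>
        (symToMat 0 x).trace * (symToMat 0 x).det ^ l *
          Real.exp (-((Ψ * symToMat 0 x).trace) - ((Γ * (symToMat 0 x)⁻¹).trace)))
        = fun _ => (0:ℝ) := by
      funext x
      simp [Matrix.trace]
    rw [hzero]
    exact (integrable_zero _ _ _).integrableOn
  -- p > 0
  set X := {ij : Fin p × Fin p // ij.1 ≤ ij.2} with hX
  set S := {x : X → ℝ | (symToMat p x).PosDef} with hS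
  have hSmeas : MeasurableSet S := mgig_measurableS p
  set N := Fintype.card X with hN
  have hNpos : 0 < N := Fintype.card_pos_iff.mpr ⟨⟨(⟨0, hp⟩, ⟨0, hp⟩), le_refl _⟩⟩
  set d := c / (2 * N) with hd
  have hdpos : 0 < d := by
    apply div_pos hc
    positivity
  obtain ⟨C, hC0, hC⟩ := mgig_core hp l c hc
  -- the measurable auxiliary function (rpow replaced by exp ∘ log)
  set F := fun x : X → ℝ => (symToMat p x).trace *
      Real.exp (Real.log (symToMat p x).det * l) *
      Real.exp (-((Ψ * symToMat p x).trace) - ((Γ * (symToMat p x)⁻¹).trace)) with hF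
  have hFmeas : Measurable F := by
    have h1 : Measurable fun x : X → ℝ => (symToMat p x).trace :=
      ((symToMat_continuous p).matrix_trace).measurable
    have h2 : Measurable fun x : X → ℝ => (symToMat p x).det :=
      ((symToMat_continuous p).matrix_det).measurable
    have h3 : Measurable fun x : X → ℝ => (Ψ * symToMat p x).trace :=
      ((continuous_const.matrix_mul (symToMat_continuous p)).matrix_trace).measurable
    have h4 : Measurable fun x : X → ℝ => (Γ * (symToMat p x)⁻¹).trace := by
      have heq : ∀ x : X → ℝ, (Γ * (symToMat p x)⁻¹).trace =
          (symToMat p x).det⁻¹ * (Γ * (symToMat p x).adjugate).trace := by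
        intro x
        rw [Matrix.inv_def, Ring.inverse_eq_inv', Matrix.mul_smul, Matrix.trace_smul,
          smul_eq_mul]
      simp_rw [heq]
      exact (h2.inv).mul
        ((continuous_const.matrix_mul
          ((symToMat_continuous p).matrix_adjugate)).matrix_trace).measurable
    exact (h1.mul (Real.measurable_exp.comp ((Real.measurable_log.comp h2).mul
      measurable_const))).mul (Real.measurable_exp.comp ((h3.neg).sub h4))
  have hEqOn : Set.EqOn F (fun x : X → ℝ =>
      (symToMat p x).trace * (symToMat p x).det ^ l *
        Real.exp (-((Ψ * symToMat p x).trace) - ((Γ * (symToMat p x)⁻¹).trace))) S := by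
    intro x hx
    have hdet : 0 < (symToMat p x).det := hx.det_pos
    simp only [hF]
    rw [Real.rpow_def_of_pos hdet]
  -- the dominating function
  set g := fun x : X → ℝ => C * ∏ k : X, Real.exp (-(d * |x k|)) with hg
  have hgint : Integrable g := by
    apply Integrable.const_mul
    exact Integrable.fintype_prod (f := fun _ : X => fun r : ℝ => Real.exp (-(d * |r|)))
      (fun _ => mgig_exp_abs_integrable hdpos)
  -- pointwise bound on S
  have hbound : ∀ x ∈ S, ‖F x‖ ≤ g x := by
    intro x hx
    have hPD : (symToMat p x).PosDef := hx
    set A := symToMat p x with hA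
    have ht := mgig_trace_pos hp hPD
    have hs := mgig_trace_pos hp hPD.inv
    have hdet := hPD.det_pos
    -- rewrite F as the original function
    have hFx : F x = A.trace * A.det ^ l *
        Real.exp (-((Ψ * A).trace) - ((Γ * A⁻¹).trace)) := by
      simp only [hF]
      rw [Real.rpow_def_of_pos hdet]
    -- trace inequalities
    have htrΨ : c * A.trace ≤ (Ψ * A).trace := by
      have h0 : 0 ≤ ((Ψ - c • 1) * A).trace :=
        mgig_trace_mul_nonneg hΨc.posSemidef hPD.posSemidef
      have hexp : ((Ψ - c • 1) * A).trace = (Ψ * A).trace - c * A.trace := by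
        rw [Matrix.sub_mul, Matrix.trace_sub, Matrix.smul_mul, Matrix.one_mul,
          Matrix.trace_smul, smul_eq_mul]
      linarith [hexp ▸ h0]
    have htrΓ : c * A⁻¹.trace ≤ (Γ * A⁻¹).trace := by
      have h0 : 0 ≤ ((Γ - c • 1) * A⁻¹).trace :=
        mgig_trace_mul_nonneg hΓc.posSemidef hPD.inv.posSemidef
      have hexp : ((Γ - c • 1) * A⁻¹).trace = (Γ * A⁻¹).trace - c * A⁻¹.trace := by
        rw [Matrix.sub_mul, Matrix.trace_sub, Matrix.smul_mul, Matrix.one_mul,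
          Matrix.trace_smul, smul_eq_mul]
      linarith [hexp ▸ h0]
    have hexpineq : Real.exp (-((Ψ * A).trace) - ((Γ * A⁻¹).trace)) ≤
        Real.exp (-(c * A.trace)) * Real.exp (-(c * A⁻¹.trace)) := by
      rw [← Real.exp_add]
      apply Real.exp_le_exp.mpr
      linarith
    have hFpos : 0 < F x := by
      rw [hFx]
      positivity
    rw [Real.norm_eq_abs, abs_of_pos hFpos, hFx]
    have step1 : A.trace * A.det ^ l *
        Real.exp (-((Ψ * A).trace) - ((Γ * A⁻¹).trace)) ≤
        A.trace * A.det ^ l *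
          (Real.exp (-(c * A.trace)) * Real.exp (-(c * A⁻¹.trace))) := by
      apply mul_le_mul_of_nonneg_left hexpineq
      positivity
    have step2 := hC A hPD
    -- exp (-(c/2 * trace)) ≤ ∏ exp (-(d * |x k|))
    have step3 : Real.exp (-(c/2 * A.trace)) ≤ ∏ k : X, Real.exp (-(d * |x k|)) := by
      rw [← Real.exp_sum]
      apply Real.exp_le_exp.mpr
      have hxk : ∀ k : X, |x k| ≤ A.trace := by
        intro k
        have hkey : A k.1.1 k.1.2 = x k := by
          show (symToMat p x) k.1.1 k.1.2 = x k
          simp only [symToMat, Matrix.of_apply, dif_pos k.2]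
          rfl
        rw [← hkey]
        exact mgig_entry_abs_le hPD _ _
      have hsum : ∑ k : X, d * |x k| ≤ ∑ _k : X, d * A.trace := by
        apply Finset.sum_le_sum
        intro k _
        exact mul_le_mul_of_nonneg_left (hxk k) hdpos.le
      have hsum2 : (∑ _k : X, d * A.trace) = c/2 * A.trace := by
        rw [Finset.sum_const, Finset.card_univ, ← hN, nsmul_eq_mul, hd]
        field_simp
      have : ∑ k : X, d * |x k| ≤ c/2 * A.trace := by
        rw [← hsum2]; exact hsum
      have hneg : ∑ k : X, -(d * |x k|) = -(∑ k : X, d * |x k|) := by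
        rw [← Finset.sum_neg_distrib]
      rw [hneg]
      linarith
    calc A.trace * A.det ^ l * Real.exp (-((Ψ * A).trace) - ((Γ * A⁻¹).trace))
        ≤ A.trace * A.det ^ l *
            (Real.exp (-(c * A.trace)) * Real.exp (-(c * A⁻¹.trace))) := step1
      _ ≤ C * Real.exp (-(c/2 * A.trace)) := step2
      _ ≤ C * ∏ k : X, Real.exp (-(d * |x k|)) :=
          mul_le_mul_of_nonneg_left step3 hC0
      _ = g x := rfl
  have hFint : IntegrableOn F S := by
    apply Integrable.mono' hgint.integrableOn hFmeas.aestronglyMeasurable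
    rw [ae_restrict_iff' hSmeas]
    exact ae_of_all _ hbound
  exact hFint.congr_fun hEqOn hSmeas
end

section
/- Let p ≥ 2, let Ψ be p×p symmetric positive definite, let P be the p×p 'flip' permutation matrix with ones on the anti-diagonal, let Ψ̃^{1/2} be the lower-triangular Cholesky factor of PΨP (so Ψ̃^{1/2}(Ψ̃^{1/2})ᵀ = PΨP), and let S be any p×p symmetric positive semidefinite matrix. Fix i ∈ {1,…,p−1} and let U_i Λ_i U_iᵀ = ((Ψ̃^{-1/2}) P S P (Ψ̃^{-1/2})ᵀ)_{1:(p−i),1:(p−i)} be a spectral decomposition of the leading (p−i)×(p−i) principal submatrix, with U_i orthogonal and Λ_i diagonal. Then for all α, μ > 0: α (Ψ)_{(i+1):p,(i+1):p} + μ (S)_{(i+1):p,(i+1):p} = P^{(p−i)} (Ψ̃^{1/2})_{1:(p−i),1:(p−i)} U_i (α I + μ Λ_i) U_iᵀ ((Ψ̃^{1/2})_{1:(p−i),1:(p−i)})ᵀ P^{(p−i)}, where P^{(p−i)} is the (p−i)×(p−i) anti-diagonal permutation matrix. -/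
open Matrix

/-- The anti-diagonal ("flip") permutation matrix. -/
def flipMat (n : ℕ) : Matrix (Fin n) (Fin n) ℝ :=
  Matrix.of fun h j => if j = h.rev then 1 else 0

lemma flip_mul {n : ℕ} (A : Matrix (Fin n) (Fin n) ℝ) :
    flipMat n * A = A.submatrix Fin.rev id := by
  ext a b
  simp [flipMat, mul_apply]

lemma mul_flip {n : ℕ} (A : Matrix (Fin n) (Fin n) ℝ) :
    A * flipMat n = A.submatrix id Fin.rev := by
  ext a b
  simp only [mul_apply, flipMat, of_apply, submatrix_apply, id_eq]
  rw [Finset.sum_eq_single b.rev]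
  · simp
  · intro c _ hc
    rw [if_neg fun hbc => hc (by rw [hbc, Fin.rev_rev]), mul_zero]
  · simp

lemma sum_castLE {p n : ℕ} (h : n ≤ p) (f : Fin p → ℝ)
    (hf : ∀ k : Fin p, n ≤ k.val → f k = 0) :
    ∑ k : Fin p, f k = ∑ a : Fin n, f (Fin.castLE h a) := by
  rw [← Finset.sum_image (g := Fin.castLE h) (f := f) (s := Finset.univ)
    (fun x _ y _ hxy => Fin.castLE_injective h hxy)]
  refine (Finset.sum_subset (Finset.subset_univ _) ?_).symm
  intro k _ hk
  refine hf k (le_of_not_gt fun hlt => hk ?_)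
  exact Finset.mem_image.2 ⟨⟨k.val, hlt⟩, Finset.mem_univ _, rfl⟩

/-- Leading principal submatrix of (lower triangular) * X. -/
lemma submatrix_lower_mul {p n : ℕ} (h : n ≤ p) (L X : Matrix (Fin p) (Fin p) ℝ)
    (hLlow : ∀ a b : Fin p, a < b → L a b = 0) :
    (L * X).submatrix (Fin.castLE h) (Fin.castLE h)
      = L.submatrix (Fin.castLE h) (Fin.castLE h) * X.submatrix (Fin.castLE h) (Fin.castLE h) := by
  ext a b
  simp only [submatrix_apply, mul_apply]
  exact sum_castLE h _ fun k hk => by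
    rw [hLlow _ _ (by simpa [Fin.lt_def] using lt_of_lt_of_le a.isLt hk), zero_mul]

/-- Leading principal submatrix of X * (lower triangular)ᵀ. -/
lemma submatrix_mul_lowerT {p n : ℕ} (h : n ≤ p) (L X : Matrix (Fin p) (Fin p) ℝ)
    (hLlow : ∀ a b : Fin p, a < b → L a b = 0) :
    (X * Lᵀ).submatrix (Fin.castLE h) (Fin.castLE h)
      = X.submatrix (Fin.castLE h) (Fin.castLE h)
          * (L.submatrix (Fin.castLE h) (Fin.castLE h))ᵀ := by
  ext a b
  simp only [submatrix_apply, mul_apply, transpose_apply]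
  exact sum_castLE h _ fun k hk => by
    rw [hLlow _ _ (by simpa [Fin.lt_def] using lt_of_lt_of_le b.isLt hk), mul_zero]

lemma submatrix_one_castLE {p n : ℕ} (h : n ≤ p) :
    (1 : Matrix (Fin p) (Fin p) ℝ).submatrix (Fin.castLE h) (Fin.castLE h) = 1 := by
  ext a b
  simp only [submatrix_apply, one_apply]
  by_cases hab : a = b
  · simp [hab]
  · rw [if_neg hab, if_neg fun hc => hab (Fin.castLE_injective h hc)]

lemma flip_conj_submatrix {p i : ℕ} (hip : i ≤ p) (X : Matrix (Fin p) (Fin p) ℝ) :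
    flipMat (p - i) *
        ((flipMat p * X * flipMat p).submatrix (Fin.castLE (Nat.sub_le p i))
          (Fin.castLE (Nat.sub_le p i))) * flipMat (p - i)
      = X.submatrix (fun k : Fin (p - i) => (⟨i + k.val, by have := k.isLt; omega⟩ : Fin p))
          (fun k : Fin (p - i) => (⟨i + k.val, by have := k.isLt; omega⟩ : Fin p)) := by
  rw [flip_mul, mul_flip, flip_mul, mul_flip]
  ext a b
  simp only [submatrix_apply, id_eq]
  congr 1 <;>
  · apply Fin.ext
    simp only [Fin.val_rev, Fin.coe_castLE]
    have ha := a.isLt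
    have hb := b.isLt
    omega

theorem stmt19 (p : ℕ) (hp : 2 ≤ p) (Ψ S L : Matrix (Fin p) (Fin p) ℝ)
    (hΨ : Ψ.PosDef) (hS : S.PosSemidef)
    (hLlow : ∀ h j : Fin p, h < j → L h j = 0) (hLdiag : ∀ j, 0 < L j j)
    (hL : L * Lᵀ = flipMat p * Ψ * flipMat p)
    (i : ℕ) (hi1 : 1 ≤ i) (hi2 : i ≤ p - 1)
    (U : Matrix (Fin (p - i)) (Fin (p - i)) ℝ) (d : Fin (p - i) → ℝ)
    (hU1 : U * Uᵀ = 1) (hU2 : Uᵀ * U = 1)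
    (hspec : U * Matrix.diagonal d * Uᵀ =
      (L⁻¹ * flipMat p * S * flipMat p * (L⁻¹)ᵀ).submatrix
        (Fin.castLE (Nat.sub_le p i)) (Fin.castLE (Nat.sub_le p i))) :
    ∀ α μ : ℝ, 0 < α → 0 < μ →
      α • Ψ.submatrix (fun k : Fin (p - i) => (⟨i + k.val, by have := k.isLt; omega⟩ : Fin p))
            (fun k : Fin (p - i) => (⟨i + k.val, by have := k.isLt; omega⟩ : Fin p)) +
          μ • S.submatrix (fun k : Fin (p - i) => (⟨i + k.val, by have := k.isLt; omega⟩ : Fin p))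
            (fun k : Fin (p - i) => (⟨i + k.val, by have := k.isLt; omega⟩ : Fin p))
        = flipMat (p - i) *
            (L.submatrix (Fin.castLE (Nat.sub_le p i)) (Fin.castLE (Nat.sub_le p i))) * U *
            (α • (1 : Matrix (Fin (p - i)) (Fin (p - i)) ℝ) + μ • Matrix.diagonal d) * Uᵀ *
            (L.submatrix (Fin.castLE (Nat.sub_le p i)) (Fin.castLE (Nat.sub_le p i)))ᵀ *
            flipMat (p - i) := by
  intro α μ hα hμ
  have hip : i ≤ p := by omega
  have hn : p - i ≤ p := Nat.sub_le p i
  set L₁ := L.submatrix (Fin.castLE (Nat.sub_le p i)) (Fin.castLE (Nat.sub_le p i)) with hL₁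
  -- L is invertible
  have hBT : L.BlockTriangular OrderDual.toDual := fun a b hab => hLlow a b hab
  have hdet : L.det = ∏ j, L j j := Matrix.det_of_lowerTriangular L hBT
  have hdet0 : L.det ≠ 0 := by
    rw [hdet]; exact ne_of_gt (Finset.prod_pos fun j _ => hLdiag j)
  have hdetU : IsUnit L.det := isUnit_iff_ne_zero.2 hdet0
  haveI : Invertible L := L.invertibleOfIsUnitDet hdetU
  have hinvBT : (L⁻¹).BlockTriangular OrderDual.toDual :=
    Matrix.blockTriangular_inv_of_blockTriangular hBT
  have hinvlow : ∀ a b : Fin p, a < b → L⁻¹ a b = 0 := fun a b hab => hinvBT hab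
  -- leading block of identity
  have hone : L₁ * (L⁻¹).submatrix (Fin.castLE (Nat.sub_le p i)) (Fin.castLE (Nat.sub_le p i))
      = 1 := by
    rw [hL₁, ← submatrix_lower_mul _ L L⁻¹ hLlow, Matrix.mul_nonsing_inv L hdetU,
      submatrix_one_castLE]
  -- the Ψ block identity
  have hΨblk : L₁ * L₁ᵀ
      = (flipMat p * Ψ * flipMat p).submatrix (Fin.castLE (Nat.sub_le p i))
          (Fin.castLE (Nat.sub_le p i)) := by
    rw [← hL, submatrix_lower_mul _ L Lᵀ hLlow, hL₁, transpose_submatrix]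
  -- the S block identity
  have hSblk : L₁ * (U * Matrix.diagonal d * Uᵀ) * L₁ᵀ
      = (flipMat p * S * flipMat p).submatrix (Fin.castLE (Nat.sub_le p i))
          (Fin.castLE (Nat.sub_le p i)) := by
    have hassoc : L⁻¹ * flipMat p * S * flipMat p * (L⁻¹)ᵀ
        = (L⁻¹ * (flipMat p * S * flipMat p)) * (L⁻¹)ᵀ := by
      simp only [mul_assoc]
    rw [hspec, hassoc, submatrix_mul_lowerT _ L⁻¹ _ hinvlow,
      submatrix_lower_mul _ L⁻¹ _ hinvlow]
    calc L₁ * ((L⁻¹).submatrix _ _ * (flipMat p * S * flipMat p).submatrix _ _ *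
            ((L⁻¹).submatrix _ _)ᵀ) * L₁ᵀ
        = (L₁ * (L⁻¹).submatrix (Fin.castLE (Nat.sub_le p i)) (Fin.castLE (Nat.sub_le p i))) *
            (flipMat p * S * flipMat p).submatrix (Fin.castLE (Nat.sub_le p i))
              (Fin.castLE (Nat.sub_le p i)) *
            (L₁ * (L⁻¹).submatrix (Fin.castLE (Nat.sub_le p i)) (Fin.castLE (Nat.sub_le p i)))ᵀ := by
          rw [transpose_mul]; simp only [mul_assoc]
      _ = (flipMat p * S * flipMat p).submatrix (Fin.castLE (Nat.sub_le p i))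
              (Fin.castLE (Nat.sub_le p i)) := by
          rw [hone, transpose_one, one_mul, mul_one]
  -- assemble
  have hmid : U * (α • (1 : Matrix (Fin (p - i)) (Fin (p - i)) ℝ) + μ • Matrix.diagonal d) * Uᵀ
      = α • (1 : Matrix (Fin (p - i)) (Fin (p - i)) ℝ) + μ • (U * Matrix.diagonal d * Uᵀ) := by
    rw [Matrix.mul_add, Matrix.add_mul, Matrix.mul_smul, Matrix.smul_mul, mul_one, hU1,
      Matrix.mul_smul, Matrix.smul_mul]
  have key : flipMat (p - i) * L₁ * U *
        (α • (1 : Matrix (Fin (p - i)) (Fin (p - i)) ℝ) + μ • Matrix.diagonal d) * Uᵀ * L₁ᵀ *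
        flipMat (p - i)
      = flipMat (p - i) * (L₁ * (U * (α • (1 : Matrix (Fin (p - i)) (Fin (p - i)) ℝ) +
          μ • Matrix.diagonal d) * Uᵀ) * L₁ᵀ) * flipMat (p - i) := by
    simp only [mul_assoc]
  rw [key, hmid]
  simp only [Matrix.mul_add, Matrix.add_mul, Matrix.mul_smul, Matrix.smul_mul, Matrix.mul_one]
  rw [hΨblk, hSblk, flip_conj_submatrix hip Ψ, flip_conj_submatrix hip S]
end
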